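/- Let ψ : [0,∞) → ℝ admit a Sawi transform T(s) at s > 0 (with suitable integrability), and define the Prabhakar fractional integral I_{α,ρ,ω}^γ ψ(t) = ∫₀^t (t−τ)^(ρ−1)·E_{α,ρ}^γ(ω(t−τ)^α)·ψ(τ) dτ for α, ρ > 0. Then for s > 0 with |ω·s^α| < 1, Sa[I_{α,ρ,ω}^γ ψ](s) = s^ρ·(1−ω·s^α)^(−γ)·T(s). -/

import Mathlib

open MeasureTheory Real Set

/-- The Sawi transform of `ψ` at `s`. -/
noncomputable def Sawi (ψ : ℝ → ℝ) (s : ℝ) : ℝ :=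
  (1 / s ^ 2) * ∫ t in Ioi (0 : ℝ), ψ t * Real.exp (-t / s)

/-- The three-parameter Mittag-Leffler (Prabhakar) function. -/
noncomputable def prabhakarML (α ρ γ z : ℝ) : ℝ :=
  ∑' k : ℕ, (ascPochhammer ℝ k).eval γ * z ^ k /
    (Real.Gamma (α * k + ρ) * (Nat.factorial k))

/-- The Prabhakar fractional integral. -/
noncomputable def prabhakarIntegral (α ρ γ ω : ℝ) (ψ : ℝ → ℝ) (t : ℝ) : ℝ :=
  ∫ τ in (0 : ℝ)..t, (t - τ) ^ (ρ - 1) * prabhakarML α ρ γ (ω * (t - τ) ^ α) * ψ τ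


private lemma poch_abs_le (γ : ℝ) (k : ℕ) :
    |(ascPochhammer ℝ k).eval γ| ≤ (ascPochhammer ℝ k).eval (|γ| + 1) := by
  induction k with
  | zero => simp
  | succ n ih =>
    rw [ascPochhammer_succ_eval, ascPochhammer_succ_eval, abs_mul]
    have h1 : |γ + n| ≤ |γ| + 1 + n := by
      calc |γ + n| ≤ |γ| + |(n:ℝ)| := abs_add_le _ _
      _ ≤ |γ| + 1 + n := by
        rw [abs_of_nonneg (by positivity : (0:ℝ) ≤ (n:ℝ))]; linarith
    have h2 : (0:ℝ) < (ascPochhammer ℝ n).eval (|γ| + 1) :=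
      ascPochhammer_pos n _ (by positivity)
    exact mul_le_mul ih h1 (abs_nonneg _) h2.le

private lemma tendsto_ratio_aux (c : ℝ) :
    Filter.Tendsto (fun k : ℕ => (c + k) / ((k:ℝ) + 1)) Filter.atTop (nhds 1) := by
  have h : Filter.Tendsto (fun k : ℕ => (c - 1) / ((k:ℝ) + 1) + 1) Filter.atTop (nhds 1) := by
    have : Filter.Tendsto (fun k : ℕ => (c - 1) / ((k:ℝ) + 1)) Filter.atTop (nhds 0) := by
      apply Filter.Tendsto.div_atTop tendsto_const_nhds
      exact Filter.tendsto_atTop_add_const_right _ _ tendsto_natCast_atTop_atTop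
    simpa using this.add tendsto_const_nhds
  refine h.congr (fun k => ?_)
  have : ((k:ℝ) + 1) ≠ 0 := by positivity
  field_simp
  ring

private lemma summable_C {c y : ℝ} (hc : 0 < c) (hy : |y| < 1) :
    Summable (fun k : ℕ => (ascPochhammer ℝ (k+1)).eval c / (Nat.factorial k) * y ^ k) := by
  set z : ℝ := max |y| (1/2) with hz
  have hz0 : 0 < z := lt_of_lt_of_le (by norm_num) (le_max_right _ _)
  have hz1 : z < 1 := max_lt hy (by norm_num)
  have hyz : |y| ≤ z := le_max_left _ _
  have hpos : ∀ k : ℕ, 0 < (ascPochhammer ℝ (k+1)).eval c / (Nat.factorial k) * z ^ k := by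
    intro k
    have := ascPochhammer_pos (k+1) c hc
    have : (0:ℝ) < Nat.factorial k := by positivity
    positivity
  have hB : Summable (fun k : ℕ => (ascPochhammer ℝ (k+1)).eval c / (Nat.factorial k) * z ^ k) := by
    apply summable_of_ratio_test_tendsto_lt_one hz1
      (Filter.Eventually.of_forall fun k => (hpos k).ne')
    have key : ∀ k : ℕ,
        ‖(ascPochhammer ℝ (k+1+1)).eval c / (Nat.factorial (k+1)) * z ^ (k+1)‖ /
          ‖(ascPochhammer ℝ (k+1)).eval c / (Nat.factorial k) * z ^ k‖
        = (c + 1 + k) / ((k:ℝ) + 1) * z := by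
      intro k
      rw [Real.norm_of_nonneg (hpos (k+1)).le, Real.norm_of_nonneg (hpos k).le]
      have he : (ascPochhammer ℝ (k+1+1)).eval c
          = (ascPochhammer ℝ (k+1)).eval c * (c + (k+1)) := by
        rw [ascPochhammer_succ_eval]; push_cast; ring
      have h1 : (0:ℝ) < (ascPochhammer ℝ (k+1)).eval c := ascPochhammer_pos _ c hc
      have h2 : (0:ℝ) < Nat.factorial k := by positivity
      have h3 : (Nat.factorial (k+1) : ℝ) = (k+1) * Nat.factorial k := by
        rw [Nat.factorial_succ]; push_cast; ring
      rw [he, h3, pow_succ]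
      field_simp
      ring
    rw [funext key]
    have := (tendsto_ratio_aux (c+1)).mul_const z
    simpa using this
  apply Summable.of_norm_bounded hB
  intro k
  have h1 : (0:ℝ) ≤ (ascPochhammer ℝ (k+1)).eval c := (ascPochhammer_pos _ c hc).le
  have h2 : (0:ℝ) < Nat.factorial k := by positivity
  rw [norm_mul, norm_div, norm_pow]
  rw [Real.norm_of_nonneg h1, Real.norm_of_nonneg h2.le]
  apply mul_le_mul_of_nonneg_left _ (by positivity)
  exact pow_le_pow_left₀ (abs_nonneg y) hyz k

private lemma summable_main (γ : ℝ) {x : ℝ} (hx : |x| < 1) :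
    Summable (fun k : ℕ => (ascPochhammer ℝ k).eval γ / (Nat.factorial k) * x ^ k) := by
  have hc : (0:ℝ) < |γ| + 1 := by positivity
  have hx' : |(|x|)| < 1 := by rwa [abs_abs]
  apply Summable.of_norm_bounded (((summable_C hc hx').mul_left (|γ|+1)⁻¹))
  intro k
  have h1 : |(ascPochhammer ℝ k).eval γ| ≤ (ascPochhammer ℝ k).eval (|γ|+1) := poch_abs_le γ k
  have h2 : (|γ|+1) * (ascPochhammer ℝ k).eval (|γ|+1) ≤ (ascPochhammer ℝ (k+1)).eval (|γ|+1) := by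
    rw [ascPochhammer_succ_eval]
    have h3 := (ascPochhammer_pos k (|γ|+1) hc).le
    have h6 : (0:ℝ) ≤ (k:ℝ) := by positivity
    nlinarith
  have h4 : (0:ℝ) < Nat.factorial k := by positivity
  rw [norm_mul, norm_div, norm_pow, Real.norm_of_nonneg h4.le]
  rw [Real.norm_eq_abs, Real.norm_eq_abs]
  have h5 : (0:ℝ) ≤ |x|^k := by positivity
  have key : |(ascPochhammer ℝ k).eval γ| ≤ (|γ|+1)⁻¹ * (ascPochhammer ℝ (k+1)).eval (|γ|+1) := by
    rw [le_inv_mul_iff₀ hc]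
    nlinarith [(ascPochhammer_pos k (|γ|+1) hc).le]
  calc |(ascPochhammer ℝ k).eval γ| / ↑(Nat.factorial k) * |x| ^ k
      ≤ ((|γ|+1)⁻¹ * (ascPochhammer ℝ (k+1)).eval (|γ|+1)) / ↑(Nat.factorial k) * |x| ^ k := by
        gcongr
    _ = (|γ|+1)⁻¹ * ((ascPochhammer ℝ (k+1)).eval (|γ|+1) / ↑(Nat.factorial k) * |x| ^ k) := by
        ring

private lemma summable_shift (γ : ℝ) {x : ℝ} (hx : |x| < 1) :
    Summable (fun k : ℕ =>
      (γ + k) * ((ascPochhammer ℝ k).eval γ / (Nat.factorial k)) * x ^ k) := by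
  have hc : (0:ℝ) < |γ| + 1 := by positivity
  have hx' : |(|x|)| < 1 := by rwa [abs_abs]
  apply Summable.of_norm_bounded (summable_C hc hx')
  intro k
  have h1 : |(γ + k) * (ascPochhammer ℝ k).eval γ| ≤ (ascPochhammer ℝ (k+1)).eval (|γ|+1) := by
    rw [ascPochhammer_succ_eval, abs_mul]
    have h2 : |γ + (k:ℝ)| ≤ (|γ|+1) + k := by
      calc |γ + (k:ℝ)| ≤ |γ| + |(k:ℝ)| := abs_add_le _ _
        _ ≤ (|γ|+1) + k := by rw [abs_of_nonneg (by positivity : (0:ℝ) ≤ (k:ℝ))]; linarith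
    have h3 := (ascPochhammer_pos k (|γ|+1) hc).le
    calc |γ + (k:ℝ)| * |(ascPochhammer ℝ k).eval γ|
        ≤ ((|γ|+1) + k) * (ascPochhammer ℝ k).eval (|γ|+1) := by
          apply mul_le_mul h2 (poch_abs_le γ k) (abs_nonneg _) (by positivity)
      _ = (ascPochhammer ℝ k).eval (|γ|+1) * ((|γ|+1) + k) := by ring
  have h4 : (0:ℝ) < Nat.factorial k := by positivity
  rw [norm_mul, norm_pow, Real.norm_eq_abs, Real.norm_eq_abs]
  rw [show (γ + (k:ℝ)) * ((ascPochhammer ℝ k).eval γ / (Nat.factorial k))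
      = ((γ + k) * (ascPochhammer ℝ k).eval γ) / (Nat.factorial k) by ring]
  rw [abs_div, abs_of_nonneg h4.le]
  have h7 := (ascPochhammer_pos (k+1) (|γ|+1) hc).le
  gcongr

private lemma binom_hasDerivAt (γ : ℝ) {y : ℝ} (hy : |y| < 1) :
    HasDerivAt (fun z : ℝ => ∑' k : ℕ, (ascPochhammer ℝ k).eval γ / (Nat.factorial k) * z ^ k)
      (∑' k : ℕ, (ascPochhammer ℝ k).eval γ / (Nat.factorial k) * (k * y ^ (k-1))) y := by
  set a : ℕ → ℝ := fun k => (ascPochhammer ℝ k).eval γ / (Nat.factorial k) with ha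
  set c : ℝ := |γ| + 1 with hcdef
  have hc : (0:ℝ) < c := by positivity
  set r : ℝ := (|y| + 1) / 2 with hrdef
  have hyr : |y| < r := by rw [hrdef]; linarith
  have hr0 : 0 < r := lt_of_le_of_lt (abs_nonneg y) hyr
  have hr1 : r < 1 := by rw [hrdef]; linarith
  have habs : ∀ k : ℕ, |a k| ≤ (ascPochhammer ℝ k).eval c / (Nat.factorial k) := by
    intro k
    rw [ha]
    have h4 : (0:ℝ) < Nat.factorial k := by positivity
    rw [abs_div, abs_of_nonneg h4.le]
    gcongr
    exact poch_abs_le γ k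
  have hu : Summable (fun k : ℕ =>
      r⁻¹ * ((ascPochhammer ℝ (k+1)).eval c / (Nat.factorial k) * r ^ k)) := by
    apply Summable.mul_left
    exact summable_C hc (by rw [abs_of_pos hr0]; exact hr1)
  apply hasDerivAt_tsum_of_isPreconnected hu (Metric.isOpen_ball (x := (0:ℝ)) (ε := r))
    (convex_ball (0:ℝ) r).isPreconnected
    (fun k z _ => (hasDerivAt_pow k z).const_mul (a k))
    ?_ (Metric.mem_ball_self hr0) ?_ ?_
  · intro k z hz
    rw [Metric.mem_ball, dist_zero_right, Real.norm_eq_abs] at hz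
    rw [Real.norm_eq_abs, abs_mul, abs_mul]
    have h1 : |(k:ℝ)| = (k:ℝ) := abs_of_nonneg (by positivity)
    have h2 : |z ^ (k-1)| ≤ r ^ (k-1) := by
      rw [abs_pow]
      exact pow_le_pow_left₀ (abs_nonneg z) hz.le _
    have hb : |a k| * (|(k:ℝ)| * |z ^ (k-1)|) ≤
        ((ascPochhammer ℝ k).eval c / (Nat.factorial k)) * ((k:ℝ) * r ^ (k-1)) := by
      rw [h1]
      have h3 : (0:ℝ) ≤ (ascPochhammer ℝ k).eval c / (Nat.factorial k) := by
        have := (ascPochhammer_pos k c hc).le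
        positivity
      apply mul_le_mul (habs k) _ (by positivity) h3
      exact mul_le_mul_of_nonneg_left h2 (by positivity)
    refine hb.trans ?_
    match k with
    | 0 => simp; positivity
    | (n+1) =>
      have he : (ascPochhammer ℝ (n+2)).eval c = (ascPochhammer ℝ (n+1)).eval c * (c + (n+1)) := by
        rw [ascPochhammer_succ_eval]; push_cast; ring
      have hp := (ascPochhammer_pos (n+1) c hc).le
      have hf : (0:ℝ) < Nat.factorial (n+1) := by positivity
      have hre : ((n+1) : ℕ) - 1 = n := rfl
      rw [hre, he]
      rw [show r⁻¹ * ((ascPochhammer ℝ (n+1)).eval c * (c + (n+1)) / ↑(Nat.factorial (n+1)) *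
          r ^ (n+1)) = (ascPochhammer ℝ (n+1)).eval c * (c + (n+1)) / ↑(Nat.factorial (n+1)) *
          r ^ n by rw [pow_succ]; field_simp]
      calc (ascPochhammer ℝ (n+1)).eval c / ↑(Nat.factorial (n+1)) * (↑(n+1) * r ^ n)
          = ((ascPochhammer ℝ (n+1)).eval c * (↑n+1)) / ↑(Nat.factorial (n+1)) * r ^ n := by
            push_cast; ring
        _ ≤ ((ascPochhammer ℝ (n+1)).eval c * (c + (↑n+1))) / ↑(Nat.factorial (n+1)) * r ^ n := by
            gcongr ?_ / _ * _
            nlinarith [hp, hc]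
        _ = (ascPochhammer ℝ (n+1)).eval c * (c + (↑n+1)) / ↑(Nat.factorial (n+1)) * r ^ n := by
            ring
  · exact summable_main γ (by rw [abs_zero]; norm_num)
  · rw [Metric.mem_ball, dist_zero_right, Real.norm_eq_abs]; exact hyr

private lemma deriv_series_eq (γ : ℝ) {y : ℝ} (hy : |y| < 1) :
    (1 - y) * (∑' k : ℕ, (ascPochhammer ℝ k).eval γ / (Nat.factorial k) * (k * y ^ (k-1)))
      = γ * ∑' k : ℕ, (ascPochhammer ℝ k).eval γ / (Nat.factorial k) * y ^ k := by
  set a : ℕ → ℝ := fun k => (ascPochhammer ℝ k).eval γ / (Nat.factorial k) with ha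
  have hrec : ∀ k : ℕ, a (k+1) * (k+1) = (γ + k) * a k := by
    intro k
    rw [ha]
    simp only
    rw [ascPochhammer_succ_eval, Nat.factorial_succ]
    have h1 : (0:ℝ) < Nat.factorial k := by positivity
    push_cast
    field_simp
  -- summability of the derivative series
  have hshift : Summable (fun k : ℕ => (γ + k) * a k * y ^ k) := summable_shift γ hy
  have hd : Summable (fun k : ℕ => a k * (k * y ^ (k-1))) := by
    rw [← summable_nat_add_iff 1]
    apply hshift.congr
    intro k
    rw [show k+1-1 = k from rfl, ← hrec k]
    push_cast
    ring
  have hmain : Summable (fun k : ℕ => a k * y ^ k) := summable_main γ hy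
  -- rewrite derivative series
  have h1 : (∑' k : ℕ, a k * (k * y ^ (k-1))) = ∑' k : ℕ, (γ + k) * a k * y ^ k := by
    rw [hd.tsum_eq_zero_add]
    simp only [Nat.cast_zero, pow_zero, zero_mul, mul_zero, zero_add]
    apply tsum_congr
    intro k
    rw [show k+1-1 = k from rfl, ← hrec k]
    push_cast
    ring
  have he : Summable (fun k : ℕ => (k:ℝ) * a k * y ^ k) := by
    rw [← summable_nat_add_iff 1]
    apply (hshift.mul_left y).congr
    intro k
    rw [show ((k+1 : ℕ):ℝ) * a (k+1) * y ^ (k+1) = (a (k+1) * ((k:ℝ)+1)) * y ^ (k+1) by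
      push_cast; ring, hrec k]
    ring
  have h2 : y * (∑' k : ℕ, (γ + k) * a k * y ^ k) = ∑' k : ℕ, (k:ℝ) * a k * y ^ k := by
    rw [← tsum_mul_left]
    rw [he.tsum_eq_zero_add]
    simp only [Nat.cast_zero, zero_mul, zero_add]
    apply tsum_congr
    intro k
    rw [show ((k+1 : ℕ):ℝ) * a (k+1) * y ^ (k+1) = (a (k+1) * ((k:ℝ)+1)) * y ^ (k+1) by
      push_cast; ring, hrec k]
    ring
  rw [h1, sub_mul, one_mul, h2, ← hshift.tsum_sub he, ← tsum_mul_left]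
  apply tsum_congr
  intro k
  ring

private lemma binomial_tsum (γ : ℝ) {x : ℝ} (hx : |x| < 1) :
    ∑' k : ℕ, (ascPochhammer ℝ k).eval γ / (Nat.factorial k) * x ^ k = (1 - x) ^ (-γ) := by
  set f : ℝ → ℝ := fun z => ∑' k : ℕ, (ascPochhammer ℝ k).eval γ / (Nat.factorial k) * z ^ k
    with hf
  set g : ℝ → ℝ := fun z => f z * (1 - z) ^ γ with hg
  have hderiv : ∀ y ∈ Metric.ball (0:ℝ) 1, HasDerivAt g 0 y := by
    intro y hy
    rw [Metric.mem_ball, dist_zero_right, Real.norm_eq_abs] at hy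
    have h1y : 0 < 1 - y := by cases abs_lt.mp hy; linarith
    have hd1 := binom_hasDerivAt γ hy
    have hd2 : HasDerivAt (fun z : ℝ => (1 - z) ^ γ) (-1 * γ * (1 - y) ^ (γ - 1)) y := by
      have hbase : HasDerivAt (fun z : ℝ => 1 - z) (-1) y := by
        simpa using (hasDerivAt_id y).const_sub 1
      exact hbase.rpow_const (Or.inl h1y.ne')
    have := hd1.mul hd2
    convert this using 1
    case e'_4 => rfl
    case e'_5 => rfl
    case e'_8 => rfl
    have hkey := deriv_series_eq γ hy
    have hsplit : (1 - y) ^ γ = (1 - y) * (1 - y) ^ (γ - 1) := by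
      rw [show γ = 1 + (γ - 1) by ring, Real.rpow_add h1y]
      rw [Real.rpow_one]
      ring_nf
    rw [hsplit]
    have : (∑' k : ℕ, (ascPochhammer ℝ k).eval γ / (Nat.factorial k) * (k * y ^ (k-1)))
        * ((1 - y) * (1 - y) ^ (γ - 1))
        = ((1 - y) * (∑' k : ℕ, (ascPochhammer ℝ k).eval γ / (Nat.factorial k)
            * (k * y ^ (k-1)))) * (1 - y) ^ (γ - 1) := by ring
    rw [this, hkey]
    ring
  have hdiff : DifferentiableOn ℝ g (Metric.ball (0:ℝ) 1) :=
    fun y hy => ((hderiv y hy).differentiableAt).differentiableWithinAt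
  have hconst : g x = g 0 := by
    apply (convex_ball (0:ℝ) 1).is_const_of_fderivWithin_eq_zero hdiff
    · intro y hy
      rw [fderivWithin_of_isOpen Metric.isOpen_ball hy]
      have := ((hderiv y hy).hasFDerivAt).fderiv
      rw [this]
      ext z
      simp
    · rw [Metric.mem_ball, dist_zero_right, Real.norm_eq_abs]; exact hx
    · exact Metric.mem_ball_self one_pos
  have hg0 : g 0 = 1 := by
    rw [hg]
    simp only
    rw [sub_zero, Real.one_rpow, mul_one, hf]
    simp only
    rw [tsum_eq_single 0 (fun k hk => by
      rcases Nat.exists_eq_succ_of_ne_zero hk with ⟨n, rfl⟩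
      simp [zero_pow])]
    simp [ascPochhammer_zero]
  have h1x : 0 < 1 - x := by cases abs_lt.mp hx; linarith
  have hgx : f x * (1 - x) ^ γ = 1 := hconst.trans hg0
  rw [Real.rpow_neg h1x.le]
  exact eq_inv_of_mul_eq_one_left hgx

section Kernel

variable {α ρ γ ω s : ℝ}

/-- coefficient of the `k`-th term -/
private noncomputable def Ck (α ρ γ ω : ℝ) (k : ℕ) : ℝ :=
  (ascPochhammer ℝ k).eval γ * ω ^ k / (Real.Gamma (α * k + ρ) * (Nat.factorial k))

private noncomputable def Fk (α ρ γ ω s : ℝ) (k : ℕ) : ℝ → ℝ :=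
  fun u => Ck α ρ γ ω k * (u ^ (α * k + ρ - 1) * Real.exp (-(s⁻¹ * u)))

private lemma Fk_integrableOn (hα : 0 < α) (hρ : 0 < ρ) (hs : 0 < s) (k : ℕ) :
    IntegrableOn (Fk α ρ γ ω s k) (Ioi (0:ℝ)) := by
  apply Integrable.const_mul
  have h1 : (-1 : ℝ) < α * k + ρ - 1 := by
    have : (0:ℝ) ≤ α * k := by positivity
    linarith
  have := integrableOn_rpow_mul_exp_neg_mul_rpow (p := 1) h1 one_pos (inv_pos.mpr hs)
  apply this.congr_fun _ measurableSet_Ioi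
  intro u _
  simp [Real.rpow_one, neg_mul]

private lemma Fk_integral (hα : 0 < α) (hρ : 0 < ρ) (hs : 0 < s) (k : ℕ) :
    ∫ u in Ioi (0:ℝ), Fk α ρ γ ω s k u
      = Ck α ρ γ ω k * (Real.Gamma (α * k + ρ) * s ^ (α * (k:ℝ) + ρ)) := by
  simp only [Fk]
  rw [MeasureTheory.integral_const_mul]
  congr 1
  have ha : (0:ℝ) < α * k + ρ := by positivity
  have := integral_rpow_mul_exp_neg_mul_Ioi ha (inv_pos.mpr hs)
  rw [this, one_div, inv_inv]
  ring

private lemma Fk_norm_integral (hα : 0 < α) (hρ : 0 < ρ) (hs : 0 < s) (k : ℕ) :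
    ∫ u in Ioi (0:ℝ), ‖Fk α ρ γ ω s k u‖
      = |Ck α ρ γ ω k| * (Real.Gamma (α * k + ρ) * s ^ (α * (k:ℝ) + ρ)) := by
  have h : ∀ u ∈ Ioi (0:ℝ), ‖Fk α ρ γ ω s k u‖
      = |Ck α ρ γ ω k| * (u ^ (α * k + ρ - 1) * Real.exp (-(s⁻¹ * u))) := by
    intro u hu
    rw [Fk, Real.norm_eq_abs, abs_mul]
    congr 1
    rw [abs_of_nonneg]
    have : (0:ℝ) ≤ u ^ (α * k + ρ - 1) := Real.rpow_nonneg (le_of_lt hu) _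
    positivity
  rw [setIntegral_congr_fun measurableSet_Ioi h]
  have := Fk_integral (γ := γ) (ω := |ω| * 1) hα hρ hs k
  rw [MeasureTheory.integral_const_mul]
  have ha : (0:ℝ) < α * k + ρ := by positivity
  rw [integral_rpow_mul_exp_neg_mul_Ioi ha (inv_pos.mpr hs), one_div, inv_inv]
  ring

private lemma Ck_mul_gamma (hα : 0 < α) (hρ : 0 < ρ) (hs : 0 < s) (k : ℕ) :
    Ck α ρ γ ω k * (Real.Gamma (α * k + ρ) * s ^ (α * (k:ℝ) + ρ))
      = s ^ ρ * ((ascPochhammer ℝ k).eval γ / (Nat.factorial k) * (ω * s ^ α) ^ k) := by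
  have hg : (0:ℝ) < Real.Gamma (α * k + ρ) := Real.Gamma_pos_of_pos (by positivity)
  have hsa : (s ^ α) ^ k = s ^ (α * (k:ℝ)) := by
    rw [← Real.rpow_natCast (s ^ α) k, ← Real.rpow_mul hs.le]
  have hspl : s ^ (α * (k:ℝ) + ρ) = s ^ (α * (k:ℝ)) * s ^ ρ := Real.rpow_add hs _ _
  rw [Ck, hspl, mul_pow, hsa]
  have hf : (0:ℝ) < Nat.factorial k := by positivity
  field_simp

private lemma abs_Ck_mul_gamma (hα : 0 < α) (hρ : 0 < ρ) (hs : 0 < s) (k : ℕ) :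
    |Ck α ρ γ ω k| * (Real.Gamma (α * k + ρ) * s ^ (α * (k:ℝ) + ρ))
      = s ^ ρ * (|(ascPochhammer ℝ k).eval γ| / (Nat.factorial k) * |ω * s ^ α| ^ k) := by
  have hg : (0:ℝ) < Real.Gamma (α * k + ρ) := Real.Gamma_pos_of_pos (by positivity)
  have hsp : (0:ℝ) < s ^ (α * (k:ℝ) + ρ) := Real.rpow_pos_of_pos hs _
  have h1 : |Ck α ρ γ ω k| = |(ascPochhammer ℝ k).eval γ| * |ω| ^ k /
      (Real.Gamma (α * k + ρ) * (Nat.factorial k)) := by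
    rw [Ck, abs_div, abs_mul, abs_pow]
    congr 1
    rw [abs_of_pos (by positivity)]
  have h2 : |ω * s ^ α| ^ k = |ω| ^ k * s ^ (α * (k:ℝ)) := by
    rw [abs_mul, mul_pow, abs_of_pos (Real.rpow_pos_of_pos hs α),
      ← Real.rpow_natCast (s ^ α) k, ← Real.rpow_mul hs.le]
  have hspl : s ^ (α * (k:ℝ) + ρ) = s ^ (α * (k:ℝ)) * s ^ ρ := Real.rpow_add hs _ _
  rw [h1, h2, hspl]
  have hf : (0:ℝ) < Nat.factorial k := by positivity
  field_simp

private lemma summable_abs_norms (hα : 0 < α) (hρ : 0 < ρ) (hs : 0 < s)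
    (hω : |ω * s ^ α| < 1) :
    Summable (fun k : ℕ =>
      |Ck α ρ γ ω k| * (Real.Gamma (α * k + ρ) * s ^ (α * (k:ℝ) + ρ))) := by
  have : (fun k : ℕ => |Ck α ρ γ ω k| * (Real.Gamma (α * k + ρ) * s ^ (α * (k:ℝ) + ρ)))
      = fun k : ℕ => s ^ ρ * (|(ascPochhammer ℝ k).eval γ| / (Nat.factorial k)
          * |ω * s ^ α| ^ k) := by
    funext k; exact abs_Ck_mul_gamma hα hρ hs k
  rw [this]
  apply Summable.mul_left
  have hc : (0:ℝ) < |γ| + 1 := by positivity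
  have h1 : |(|ω * s ^ α|)| < 1 := by rwa [abs_abs]
  apply Summable.of_nonneg_of_le _ _ (summable_main (|γ| + 1) h1)
  · intro k
    have : (0:ℝ) < Nat.factorial k := by positivity
    positivity
  · intro k
    have h4 : (0:ℝ) < Nat.factorial k := by positivity
    have h5 : (0:ℝ) ≤ |ω * s ^ α| ^ k := by positivity
    have h6 := poch_abs_le γ k
    gcongr

end Kernel

open scoped ENNReal NNReal

section Kernel2

variable {α ρ γ ω s : ℝ}

private lemma Fk_tsum_eq (hα : 0 < α) (hρ : 0 < ρ) (hs : 0 < s) {u : ℝ} (hu : 0 < u) :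
    (∑' k : ℕ, Fk α ρ γ ω s k u)
      = u ^ (ρ - 1) * prabhakarML α ρ γ (ω * u ^ α) * Real.exp (-u / s) := by
  rw [prabhakarML]
  rw [show u ^ (ρ - 1) * (∑' k : ℕ, (ascPochhammer ℝ k).eval γ * (ω * u ^ α) ^ k /
        (Real.Gamma (α * k + ρ) * (Nat.factorial k))) * Real.exp (-u / s)
      = (∑' k : ℕ, (ascPochhammer ℝ k).eval γ * (ω * u ^ α) ^ k /
        (Real.Gamma (α * k + ρ) * (Nat.factorial k)))
        * (u ^ (ρ - 1) * Real.exp (-u / s)) by ring]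
  rw [← tsum_mul_right]
  apply tsum_congr
  intro k
  rw [Fk, Ck]
  have h1 : (ω * u ^ α) ^ k = ω ^ k * u ^ (α * (k:ℝ)) := by
    rw [mul_pow, ← Real.rpow_natCast (u ^ α) k, ← Real.rpow_mul hu.le]
  have h2 : u ^ (α * (k:ℝ)) * u ^ (ρ - 1) = u ^ (α * (k:ℝ) + ρ - 1) := by
    rw [← Real.rpow_add hu]
    ring_nf
  have h3 : Real.exp (-u / s) = Real.exp (-(s⁻¹ * u)) := by
    congr 1
    field_simp
  rw [h1, h3]
  rw [show (ascPochhammer ℝ k).eval γ * (ω ^ k * u ^ (α * (k:ℝ)))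
        / (Real.Gamma (α * k + ρ) * (Nat.factorial k))
        * (u ^ (ρ - 1) * Real.exp (-(s⁻¹ * u)))
      = (ascPochhammer ℝ k).eval γ * ω ^ k / (Real.Gamma (α * k + ρ) * (Nat.factorial k))
        * ((u ^ (α * (k:ℝ)) * u ^ (ρ - 1)) * Real.exp (-(s⁻¹ * u))) by ring]
  rw [h2]

private lemma Fk_aesm (hα : 0 < α) (hρ : 0 < ρ) (hs : 0 < s) (k : ℕ) :
    AEStronglyMeasurable (Fk α ρ γ ω s k) (volume.restrict (Ioi (0:ℝ))) :=
  (Fk_integrableOn hα hρ hs k).aestronglyMeasurable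

private lemma Fk_lintegral_ne_top (hα : 0 < α) (hρ : 0 < ρ) (hs : 0 < s)
    (hω : |ω * s ^ α| < 1) :
    (∑' k : ℕ, ∫⁻ u in Ioi (0:ℝ), ‖Fk α ρ γ ω s k u‖₊) ≠ ⊤ := by
  have heq : ∀ k : ℕ, (∫⁻ u in Ioi (0:ℝ), ‖Fk α ρ γ ω s k u‖₊)
      = ENNReal.ofReal (|Ck α ρ γ ω k| * (Real.Gamma (α * k + ρ) * s ^ (α * (k:ℝ) + ρ))) := by
    intro k
    rw [show (∫⁻ u in Ioi (0:ℝ), (‖Fk α ρ γ ω s k u‖₊ : ℝ≥0∞)) = ∫⁻ u in Ioi (0:ℝ), ‖Fk α ρ γ ω s k u‖ₑ from rfl,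
      ← MeasureTheory.ofReal_integral_norm_eq_lintegral_enorm (Fk_integrableOn hα hρ hs k)]
    rw [Fk_norm_integral hα hρ hs k]
  rw [funext heq]
  rw [← ENNReal.ofReal_tsum_of_nonneg]
  · exact ENNReal.ofReal_ne_top
  · intro k
    have h1 : (0:ℝ) < Real.Gamma (α * k + ρ) := Real.Gamma_pos_of_pos (by positivity)
    have h2 : (0:ℝ) < s ^ (α * (k:ℝ) + ρ) := Real.rpow_pos_of_pos hs _
    positivity
  · exact summable_abs_norms hα hρ hs hω

private lemma kernel_integral (hα : 0 < α) (hρ : 0 < ρ) (hs : 0 < s) (hω : |ω * s ^ α| < 1) :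
    ∫ u in Ioi (0:ℝ), u ^ (ρ - 1) * prabhakarML α ρ γ (ω * u ^ α) * Real.exp (-u / s)
      = s ^ ρ * (1 - ω * s ^ α) ^ (-γ) := by
  have hswap := MeasureTheory.integral_tsum (fun k => Fk_aesm (γ := γ) (ω := ω) hα hρ hs k)
    (Fk_lintegral_ne_top hα hρ hs hω)
  have hcong : ∫ u in Ioi (0:ℝ), u ^ (ρ - 1) * prabhakarML α ρ γ (ω * u ^ α) * Real.exp (-u / s)
      = ∫ u in Ioi (0:ℝ), ∑' k : ℕ, Fk α ρ γ ω s k u := by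
    apply setIntegral_congr_fun measurableSet_Ioi
    intro u hu
    exact (Fk_tsum_eq hα hρ hs hu).symm
  rw [hcong, hswap]
  have hval : ∀ k : ℕ, (∫ u in Ioi (0:ℝ), Fk α ρ γ ω s k u)
      = s ^ ρ * ((ascPochhammer ℝ k).eval γ / (Nat.factorial k) * (ω * s ^ α) ^ k) := by
    intro k
    rw [Fk_integral hα hρ hs k, Ck_mul_gamma hα hρ hs k]
  rw [funext hval, tsum_mul_left]
  congr 1
  rw [← binomial_tsum γ hω]

private lemma kernel_integrableOn (hα : 0 < α) (hρ : 0 < ρ) (hs : 0 < s)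
    (hω : |ω * s ^ α| < 1) :
    IntegrableOn (fun u => u ^ (ρ - 1) * prabhakarML α ρ γ (ω * u ^ α) * Real.exp (-u / s))
      (Ioi (0:ℝ)) := by
  set μ := volume.restrict (Ioi (0:ℝ)) with hμ
  have hne := Fk_lintegral_ne_top (γ := γ) (ω := ω) hα hρ hs hω
  have hf'' : ∀ k : ℕ, AEMeasurable (fun u => (‖Fk α ρ γ ω s k u‖₊ : ℝ≥0∞)) μ :=
    fun k => (Fk_aesm hα hρ hs k).enorm
  have hlt : ∑' k : ℕ, ∫⁻ u, (‖Fk α ρ γ ω s k u‖₊ : ℝ≥0∞) ∂μ ≠ ⊤ := hne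
  have hsummae : ∀ᵐ u ∂μ, Summable fun k : ℕ => (‖Fk α ρ γ ω s k u‖₊ : ℝ) := by
    rw [← MeasureTheory.lintegral_tsum hf''] at hlt
    refine (ae_lt_top' (AEMeasurable.ennreal_tsum hf'') hlt).mono ?_
    intro u hu
    rw [← ENNReal.tsum_coe_ne_top_iff_summable_coe]
    exact hu.ne
  have hsumm : ∀ᵐ u ∂μ, Summable fun k : ℕ => Fk α ρ γ ω s k u := by
    filter_upwards [hsummae] with u hu
    exact Summable.of_norm (by simpa [coe_nnnorm] using hu)
  have haesm : AEStronglyMeasurable (fun u => ∑' k : ℕ, Fk α ρ γ ω s k u) μ := by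
    apply aestronglyMeasurable_of_tendsto_ae (f := fun n u => ∑ k ∈ Finset.range n,
      Fk α ρ γ ω s k u) Filter.atTop
      (fun n => Finset.aestronglyMeasurable_fun_sum _ (fun k _ => Fk_aesm hα hρ hs k))
    filter_upwards [hsumm] with u hu
    exact hu.hasSum.tendsto_sum_nat
  have hint : Integrable (fun u => ∑' k : ℕ, Fk α ρ γ ω s k u) μ := by
    refine ⟨haesm, ?_⟩
    show (∫⁻ u, (‖∑' k : ℕ, Fk α ρ γ ω s k u‖₊ : ℝ≥0∞) ∂μ) < ⊤
    calc ∫⁻ u, (‖∑' k : ℕ, Fk α ρ γ ω s k u‖₊ : ℝ≥0∞) ∂μ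
        ≤ ∫⁻ u, ∑' k : ℕ, (‖Fk α ρ γ ω s k u‖₊ : ℝ≥0∞) ∂μ := by
          apply lintegral_mono_ae
          filter_upwards [hsummae] with u hu
          have hs2 : Summable fun k : ℕ => ‖Fk α ρ γ ω s k u‖₊ := by
            rwa [← NNReal.summable_coe]
          calc (‖∑' k : ℕ, Fk α ρ γ ω s k u‖₊ : ℝ≥0∞)
              ≤ ((∑' k : ℕ, ‖Fk α ρ γ ω s k u‖₊ : ℝ≥0) : ℝ≥0∞) := by
                exact_mod_cast nnnorm_tsum_le hs2
            _ = ∑' k : ℕ, (‖Fk α ρ γ ω s k u‖₊ : ℝ≥0∞) := ENNReal.coe_tsum hs2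
      _ = ∑' k : ℕ, ∫⁻ u, (‖Fk α ρ γ ω s k u‖₊ : ℝ≥0∞) ∂μ :=
          MeasureTheory.lintegral_tsum hf''
      _ < ⊤ := hne.lt_top
  apply hint.congr
  rw [Filter.EventuallyEq, hμ, MeasureTheory.ae_restrict_iff' measurableSet_Ioi]
  filter_upwards with u hu
  exact Fk_tsum_eq hα hρ hs hu

end Kernel2

open scoped Convolution

theorem sawi_prabhakarIntegral (α ρ γ ω s : ℝ) (ψ : ℝ → ℝ)
    (hα : 0 < α) (hρ : 0 < ρ) (hs : 0 < s) (hω : |ω * s ^ α| < 1)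
    (hψ : IntegrableOn (fun t => ψ t * Real.exp (-t / s)) (Ioi (0 : ℝ)))
    (hPI : IntegrableOn
      (fun t => prabhakarIntegral α ρ γ ω ψ t * Real.exp (-t / s)) (Ioi (0 : ℝ))) :
    Sawi (prabhakarIntegral α ρ γ ω ψ) s
      = s ^ ρ * (1 - ω * s ^ α) ^ (-γ) * Sawi ψ s := by
  set K : ℝ → ℝ :=
    fun u => u ^ (ρ - 1) * prabhakarML α ρ γ (ω * u ^ α) * Real.exp (-u / s) with hK
  set G : ℝ → ℝ := (Ioi (0:ℝ)).indicator K with hG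
  set H : ℝ → ℝ := (Ioi (0:ℝ)).indicator (fun τ => ψ τ * Real.exp (-τ / s)) with hH
  have hGint : Integrable G := by
    rw [hG]
    exact (kernel_integrableOn hα hρ hs hω).integrable_indicator measurableSet_Ioi
  have hHint : Integrable H := by
    rw [hH]
    exact hψ.integrable_indicator measurableSet_Ioi
  have hGval : ∫ u, G u = s ^ ρ * (1 - ω * s ^ α) ^ (-γ) := by
    rw [hG, MeasureTheory.integral_indicator measurableSet_Ioi]
    exact kernel_integral hα hρ hs hω
  have hHval : ∫ τ, H τ = ∫ t in Ioi (0:ℝ), ψ t * Real.exp (-t / s) := by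
    rw [hH, MeasureTheory.integral_indicator measurableSet_Ioi]
  have hexp : ∀ t τ : ℝ, Real.exp (-τ / s) * Real.exp (-(t - τ) / s) = Real.exp (-t / s) := by
    intro t τ
    rw [← Real.exp_add, ← add_div]
    congr 1
    ring
  have hpt : ∀ t ∈ Ioi (0:ℝ), prabhakarIntegral α ρ γ ω ψ t * Real.exp (-t / s)
      = (H ⋆[ContinuousLinearMap.mul ℝ ℝ, volume] G) t := by
    intro t ht
    rw [mem_Ioi] at ht
    rw [convolution_def]
    simp only [ContinuousLinearMap.mul_apply']
    have hind : ∀ τ : ℝ, H τ * G (t - τ) = (Ioo 0 t).indicator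
        (fun τ => ((t - τ) ^ (ρ - 1) * prabhakarML α ρ γ (ω * (t - τ) ^ α) * ψ τ)
          * Real.exp (-t / s)) τ := by
      intro τ
      by_cases h1 : τ ∈ Ioo 0 t
      · obtain ⟨h1a, h1b⟩ := h1
        rw [indicator_of_mem (by exact ⟨h1a, h1b⟩ : τ ∈ Ioo 0 t)]
        rw [hH, hG, indicator_of_mem (mem_Ioi.mpr h1a),
          indicator_of_mem (mem_Ioi.mpr (by linarith : (0:ℝ) < t - τ))]
        rw [hK]
        rw [← hexp t τ]
        ring
      · rw [indicator_of_notMem h1]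
        rcases not_and_or.mp (fun hc => h1 ⟨hc.1, hc.2⟩) with h2 | h2
        · rw [hH, indicator_of_notMem (by simpa using h2), zero_mul]
        · rw [hG, indicator_of_notMem (by simp; linarith [not_lt.mp h2]), mul_zero]
    rw [funext hind, MeasureTheory.integral_indicator measurableSet_Ioo,
      MeasureTheory.integral_mul_const]
    rw [← MeasureTheory.integral_Ioc_eq_integral_Ioo]
    rw [prabhakarIntegral, intervalIntegral.integral_of_le (le_of_lt ht)]
  have hzero : ∀ t ∉ Ioi (0:ℝ), (H ⋆[ContinuousLinearMap.mul ℝ ℝ, volume] G) t = 0 := by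
    intro t ht
    rw [mem_Ioi, not_lt] at ht
    rw [convolution_def]
    simp only [ContinuousLinearMap.mul_apply']
    have hzz : (fun τ => H τ * G (t - τ)) = fun _ => (0:ℝ) := by
      funext τ
      by_cases h1 : 0 < τ
      · have h2 : t - τ ∉ Ioi (0:ℝ) := by
          rw [mem_Ioi, not_lt]
          linarith
        rw [hG, indicator_of_notMem h2, mul_zero]
      · rw [hH, indicator_of_notMem (by simpa using h1), zero_mul]
    rw [hzz, integral_zero]
  have hconv_eq : (Ioi (0:ℝ)).indicator (H ⋆[ContinuousLinearMap.mul ℝ ℝ, volume] G)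
      = (H ⋆[ContinuousLinearMap.mul ℝ ℝ, volume] G) :=
    indicator_eq_self.mpr (Function.support_subset_iff'.mpr hzero)
  have hmain : ∫ t in Ioi (0:ℝ), prabhakarIntegral α ρ γ ω ψ t * Real.exp (-t / s)
      = (∫ τ, H τ) * (∫ u, G u) := by
    rw [setIntegral_congr_fun measurableSet_Ioi hpt]
    rw [← MeasureTheory.integral_indicator measurableSet_Ioi, hconv_eq]
    rw [integral_convolution (ContinuousLinearMap.mul ℝ ℝ) hHint hGint]
    simp [ContinuousLinearMap.mul_apply']
  rw [Sawi, Sawi, hmain, hGval, hHval]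
  ring
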